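/- Let v_a solve v'' + h(t) f(v) = 0 on (0, R₁) with v_a(0) = 0, v_a'(0⁺) = a > 0, and suppose v_a > 0 on (0, t₀] for some t₀ ∈ (0, R₁]. Then 0 < v_a(t) ≤ a t on (0, t₀], and if C > 0 is a constant with g₁(s) ≥ -C for all s ∈ [0, a R₁], then for all t ∈ (0, t₀]: v_a(t) ≤ a t − h₀ t^{2−α̃−q} / (a^q (1−α̃−q)(2−α̃−q)) + C h₁ t^{2−α̃} / ((1−α̃)(2−α̃)) (with h₀, h₁ the constants from the bound h₀ t^{-α̃} ≤ h(t) ≤ h₁ t^{-α̃}). -/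

import Mathlib

open Real Set Filter MeasureTheory

lemma lemA (b : ℝ) (w : ℝ → ℝ) (hb : 0 < b)
    (hwc : ContinuousOn w (Ioc 0 b))
    (hw1 : ∀ t ∈ Ioo (0:ℝ) b, DifferentiableAt ℝ w t)
    (hw2 : ∀ t ∈ Ioo (0:ℝ) b, DifferentiableAt ℝ (deriv w) t)
    (hw2n : ∀ t ∈ Ioo (0:ℝ) b, deriv (deriv w) t ≤ 0)
    (hslope : Tendsto (fun t => w t / t) (nhdsWithin 0 (Ioi 0)) (nhds 0)) :
    ∀ t ∈ Ioc (0:ℝ) b, w t ≤ 0 := by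
  have hanti : AntitoneOn (deriv w) (Ioo 0 b) := by
    apply antitoneOn_of_deriv_nonpos (convex_Ioo 0 b)
    · exact fun t ht => ((hw2 t ht).continuousAt).continuousWithinAt
    · rw [interior_Ioo]; exact fun t ht => (hw2 t ht).differentiableWithinAt
    · rw [interior_Ioo]; exact hw2n
  have hwlim0 : Tendsto w (nhdsWithin 0 (Ioi 0)) (nhds 0) := by
    have h1 : Tendsto (fun t : ℝ => w t / t * t) (nhdsWithin 0 (Ioi 0)) (nhds (0 * 0)) :=
      hslope.mul ((continuous_id.tendsto 0).mono_left nhdsWithin_le_nhds)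
    rw [zero_mul] at h1
    apply h1.congr'
    filter_upwards [self_mem_nhdsWithin] with t ht
    exact div_mul_cancel₀ (w t) (ne_of_gt ht)
  intro t ht
  have key : ∀ s ∈ Ioo (0:ℝ) t, w t ≤ w s / s * t := by
    intro s hs
    have hsb : s < b := lt_of_lt_of_le hs.2 ht.2
    have step1 : ∀ s' ∈ Ioo (0:ℝ) s, (w t - w s) / (t - s) ≤ (w s - w s') / (s - s') := by
      intro s' hs'
      obtain ⟨c', hc', hder'⟩ := exists_deriv_eq_slope w hs'.2
        (hwc.mono (fun x hx => ⟨lt_of_lt_of_le hs'.1 hx.1, le_trans hx.2 (le_of_lt hsb)⟩))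
        (fun x hx => ((hw1 x ⟨lt_trans hs'.1 hx.1, lt_trans hx.2 hsb⟩).differentiableWithinAt))
      obtain ⟨c, hc, hder⟩ := exists_deriv_eq_slope w hs.2
        (hwc.mono (fun x hx => ⟨lt_of_lt_of_le hs.1 hx.1, le_trans hx.2 ht.2⟩))
        (fun x hx => ((hw1 x ⟨lt_trans hs.1 hx.1, lt_of_lt_of_le hx.2 ht.2⟩).differentiableWithinAt))
      have hcc : c' ≤ c := le_of_lt (lt_trans hc'.2 hc.1)
      have hmem1 : c' ∈ Ioo (0:ℝ) b := ⟨lt_trans hs'.1 hc'.1, lt_trans hc'.2 hsb⟩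
      have hmem2 : c ∈ Ioo (0:ℝ) b := ⟨lt_trans hs.1 hc.1, lt_of_lt_of_le hc.2 ht.2⟩
      have := hanti hmem1 hmem2 hcc
      rw [hder, hder'] at this
      exact this
    have step2 : (w t - w s) / (t - s) ≤ w s / s := by
      have hlim : Tendsto (fun s' => (w s - w s') / (s - s')) (nhdsWithin 0 (Ioi 0))
          (nhds ((w s - 0) / (s - 0))) := by
        apply Filter.Tendsto.div
        · exact tendsto_const_nhds.sub hwlim0
        · exact tendsto_const_nhds.sub ((continuous_id.tendsto 0).mono_left nhdsWithin_le_nhds)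
        · simpa using ne_of_gt hs.1
      rw [sub_zero, sub_zero] at hlim
      apply ge_of_tendsto hlim
      filter_upwards [Ioo_mem_nhdsGT_of_mem (show (0:ℝ) ∈ Ico (0:ℝ) s from ⟨le_refl 0, hs.1⟩)]
        with s' hs'
      exact step1 s' hs'
    have hts : (0:ℝ) < t - s := sub_pos.mpr hs.2
    rw [div_le_iff₀ hts] at step2
    have hws : w s = w s / s * s := (div_mul_cancel₀ (w s) (ne_of_gt hs.1)).symm
    nlinarith [step2, hws]
  have hlim : Tendsto (fun s => w s / s * t) (nhdsWithin 0 (Ioi 0)) (nhds (0 * t)) :=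
    hslope.mul_const t
  rw [zero_mul] at hlim
  apply ge_of_tendsto hlim
  filter_upwards [Ioo_mem_nhdsGT_of_mem (show (0:ℝ) ∈ Ico (0:ℝ) t from ⟨le_refl 0, ht.1⟩)]
    with s hs
  exact key s hs

theorem stmt_9
    (N : ℕ) (hN : 2 < N)
    (R R₁ : ℝ) (hR : 0 < R) (hR₁ : R₁ = R ^ ((2 : ℝ) - N))
    (f g g₁ : ℝ → ℝ) (p q : ℝ) (hp : 1 < p) (hq0 : 0 < q) (hq1 : q < 1)
    (hodd : ∀ u : ℝ, f (-u) = - f u)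
    (hfloclip : ∀ x : ℝ, x ≠ 0 → ∃ ε > (0 : ℝ), ∃ L : NNReal, LipschitzOnWith L f (Metric.ball x ε))
    (hH1 : ∀ u : ℝ, u ≠ 0 → f u = |u| ^ (p - 1) * u + g u)
    (hglim : ∀ ε : ℝ, 0 < ε → ∃ M : ℝ, 0 < M ∧ ∀ u : ℝ, M ≤ |u| → |g u / |u| ^ p| ≤ ε)
    (hH2 : ∀ u : ℝ, u ≠ 0 → f u = u / |u| ^ (q + 1) + g₁ u)
    (hg1lip : LocallyLipschitz g₁) (hg10 : g₁ 0 = 0)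
    (hfpos : ∀ w : ℝ, 0 < w → 0 < f w)
    (K : ℝ → ℝ) (K₀ K₁ α : ℝ) (hK₀ : 0 < K₀) (hK₁ : 0 < K₁)
    (hα₁ : (N : ℝ) + q * ((N : ℝ) - 2) < α) (hα₂ : α < 2 * ((N : ℝ) - 1))
    (hKpos : ∀ r : ℝ, R ≤ r → 0 < K r)
    (hKdiff : ∀ r : ℝ, R ≤ r → DifferentiableAt ℝ K r)
    (hK'cont : ContinuousOn (deriv K) (Ici R))
    (hKlb : ∀ r : ℝ, R ≤ r → K₀ * r ^ (-α) ≤ K r)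
    (hKub : ∀ r : ℝ, R ≤ r → K r ≤ K₁ * r ^ (-α))
    (hKratio : ∀ r : ℝ, R ≤ r → -(r * deriv K r / K r) < 2 * ((N : ℝ) - 1))
    (hKlim : Tendsto (fun r => r * deriv K r / K r) atTop (nhds (-α)))
    (h : ℝ → ℝ)
    (hh : ∀ t : ℝ, t ∈ Ioc (0 : ℝ) R₁ →
      h t = t ^ (2 * ((N : ℝ) - 1) / (2 - (N : ℝ))) * K (t ^ (1 / (2 - (N : ℝ)))) / ((N : ℝ) - 2) ^ 2)
    (a : ℝ) (ha : 0 < a) (v : ℝ → ℝ)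
    (hvcont : ContinuousOn v (Icc 0 R₁)) (hv0 : v 0 = 0)
    (hvslope : Tendsto (fun t => v t / t) (nhdsWithin 0 (Ioi 0)) (nhds a))
    (hvdiff : ∀ t ∈ Ioo (0 : ℝ) R₁, DifferentiableAt ℝ v t ∧ DifferentiableAt ℝ (deriv v) t)
    (hODE : ∀ t ∈ Ioo (0 : ℝ) R₁, v t ≠ 0 → deriv (deriv v) t + h t * f (v t) = 0)
    (αt : ℝ) (hαt : αt = (2 * ((N : ℝ) - 1) - α) / ((N : ℝ) - 2))
    (hαt0 : 0 < αt) (hαtq : αt < 1 - q)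
    (h₀ h₁ : ℝ) (hh₀ : 0 < h₀) (hh₁ : 0 < h₁)
    (hhbd : ∀ t ∈ Ioc (0 : ℝ) R₁, h₀ * t ^ (-αt) ≤ h t ∧ h t ≤ h₁ * t ^ (-αt))
    (t₀ : ℝ) (ht₀ : t₀ ∈ Ioc (0 : ℝ) R₁)
    (hvpos : ∀ t ∈ Ioc (0 : ℝ) t₀, 0 < v t)
    (C : ℝ) (hC : 0 < C) (hg1C : ∀ s ∈ Icc (0 : ℝ) (a * R₁), -C ≤ g₁ s) :
    ∀ t ∈ Ioc (0 : ℝ) t₀, (0 < v t ∧ v t ≤ a * t) ∧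
      v t ≤ a * t - h₀ * t ^ (2 - αt - q) / (a ^ q * (1 - αt - q) * (2 - αt - q)) +
        C * h₁ * t ^ (2 - αt) / ((1 - αt) * (2 - αt)) := by
  have ht₀p : 0 < t₀ := ht₀.1
  have ht₀R : t₀ ≤ R₁ := ht₀.2
  have hsubIoo : Ioo (0:ℝ) t₀ ⊆ Ioo 0 R₁ := fun x hx => ⟨hx.1, lt_of_lt_of_le hx.2 ht₀R⟩
  have hsubIcc : Ioc (0:ℝ) t₀ ⊆ Icc 0 R₁ := fun x hx => ⟨hx.1.le, hx.2.trans ht₀R⟩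
  -- positivity of h
  have hhpos : ∀ t ∈ Ioo (0:ℝ) t₀, 0 < h t := by
    intro t ht
    have h1 : (0:ℝ) < h₀ * t ^ (-αt) := mul_pos hh₀ (Real.rpow_pos_of_pos ht.1 _)
    linarith [(hhbd t ⟨ht.1, (ht.2.le.trans ht₀R)⟩).1]
  -- PART 1 : v t ≤ a t
  have hddv : ∀ t ∈ Ioo (0:ℝ) t₀, deriv (deriv v) t = -(h t * f (v t)) := by
    intro t ht
    have := hODE t (hsubIoo ht) (hvpos t ⟨ht.1, ht.2.le⟩).ne'
    linarith
  have hw1der : ∀ s ∈ Ioo (0:ℝ) R₁, HasDerivAt (fun x => v x - a * x) (deriv v s - a) s := by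
    intro s hs
    exact (hvdiff s hs).1.hasDerivAt.sub (by simpa using (hasDerivAt_id s).const_mul a)
  have hw1eq : ∀ t ∈ Ioo (0:ℝ) t₀, (fun s => deriv v s - a) =ᶠ[nhds t] deriv (fun s => v s - a * s) := by
    intro t ht
    filter_upwards [isOpen_Ioo.mem_nhds (hsubIoo ht)] with s hs
    exact ((hw1der s hs).deriv).symm
  have part1 : ∀ t ∈ Ioc (0:ℝ) t₀, v t - a * t ≤ 0 := by
    apply lemA t₀ (fun t => v t - a * t) ht₀p
    · exact (hvcont.mono hsubIcc).sub ((continuous_const.mul continuous_id).continuousOn)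
    · intro t ht
      exact (hw1der t (hsubIoo ht)).differentiableAt
    · -- second differentiability
      intro t ht
      exact (((hvdiff t (hsubIoo ht)).2).sub_const a).congr_of_eventuallyEq (hw1eq t ht).symm
    · intro t ht
      rw [← (hw1eq t ht).deriv_eq, deriv_sub_const, hddv t ht]
      have h1 := hhpos t ht
      have h2 := hfpos (v t) (hvpos t ⟨ht.1, ht.2.le⟩)
      nlinarith
    · have : Tendsto (fun t => v t / t - a) (nhdsWithin 0 (Ioi 0)) (nhds (a - a)) :=
        hvslope.sub tendsto_const_nhds
      rw [sub_self] at this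
      apply this.congr'
      filter_upwards [self_mem_nhdsWithin] with t (ht : 0 < t)
      rw [sub_div, mul_div_assoc, div_self ht.ne', mul_one]
  
  -- PART 2
  have hd1 : (0:ℝ) < 1 - αt - q := by linarith
  have hd2 : (0:ℝ) < 1 - αt := by linarith
  have hb1 : (0:ℝ) < 2 - αt - q := by linarith
  have hb2 : (0:ℝ) < 2 - αt := by linarith
  have haq : (0:ℝ) < a ^ q := Real.rpow_pos_of_pos ha q
  have hvle : ∀ t ∈ Ioc (0:ℝ) t₀, v t ≤ a * t := by
    intro t ht; linarith [part1 t ht]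
  have hw2der : ∀ s ∈ Ioo (0:ℝ) R₁, HasDerivAt
      (fun x => v x - a * x + h₀ / (a ^ q * (1 - αt - q) * (2 - αt - q)) * x ^ (2 - αt - q)
        - C * h₁ / ((1 - αt) * (2 - αt)) * x ^ (2 - αt))
      (deriv v s - a + h₀ / (a ^ q * (1 - αt - q) * (2 - αt - q)) * ((2 - αt - q) * s ^ (2 - αt - q - 1))
        - C * h₁ / ((1 - αt) * (2 - αt)) * ((2 - αt) * s ^ (2 - αt - 1))) s := by
    intro s hs
    exact ((hw1der s hs).add
      ((Real.hasDerivAt_rpow_const (Or.inl hs.1.ne')).const_mul _)).sub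
      ((Real.hasDerivAt_rpow_const (Or.inl hs.1.ne')).const_mul _)
  have hw2eq : ∀ t ∈ Ioo (0:ℝ) t₀,
      (fun s => deriv v s - a + h₀ / (a ^ q * (1 - αt - q) * (2 - αt - q)) * ((2 - αt - q) * s ^ (2 - αt - q - 1))
        - C * h₁ / ((1 - αt) * (2 - αt)) * ((2 - αt) * s ^ (2 - αt - 1)))
      =ᶠ[nhds t] deriv (fun x => v x - a * x + h₀ / (a ^ q * (1 - αt - q) * (2 - αt - q)) * x ^ (2 - αt - q)
        - C * h₁ / ((1 - αt) * (2 - αt)) * x ^ (2 - αt)) := by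
    intro t ht
    filter_upwards [isOpen_Ioo.mem_nhds (hsubIoo ht)] with s hs
    exact ((hw2der s hs).deriv).symm
  have hW2'der : ∀ t ∈ Ioo (0:ℝ) t₀, HasDerivAt
      (fun s => deriv v s - a + h₀ / (a ^ q * (1 - αt - q) * (2 - αt - q)) * ((2 - αt - q) * s ^ (2 - αt - q - 1))
        - C * h₁ / ((1 - αt) * (2 - αt)) * ((2 - αt) * s ^ (2 - αt - 1)))
      (deriv (deriv v) t
        + h₀ / (a ^ q * (1 - αt - q) * (2 - αt - q)) * ((2 - αt - q) * ((2 - αt - q - 1) * t ^ (2 - αt - q - 1 - 1)))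
        - C * h₁ / ((1 - αt) * (2 - αt)) * ((2 - αt) * ((2 - αt - 1) * t ^ (2 - αt - 1 - 1)))) t := by
    intro t ht
    exact (((hvdiff t (hsubIoo ht)).2.hasDerivAt.sub_const a).add
      (((Real.hasDerivAt_rpow_const (Or.inl ht.1.ne')).const_mul _).const_mul _)).sub
      (((Real.hasDerivAt_rpow_const (Or.inl ht.1.ne')).const_mul _).const_mul _)
  have hmain : ∀ t ∈ Ioc (0:ℝ) t₀,
      v t - a * t + h₀ / (a ^ q * (1 - αt - q) * (2 - αt - q)) * t ^ (2 - αt - q)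
        - C * h₁ / ((1 - αt) * (2 - αt)) * t ^ (2 - αt) ≤ 0 := by
    apply lemA t₀ _ ht₀p
    · -- continuity
      apply ContinuousOn.sub
      apply ContinuousOn.add
      · exact (hvcont.mono hsubIcc).sub ((continuous_const.mul continuous_id).continuousOn)
      · exact continuousOn_const.mul (fun x hx =>
          (Real.continuousAt_rpow_const x _ (Or.inl hx.1.ne')).continuousWithinAt)
      · exact continuousOn_const.mul (fun x hx =>
          (Real.continuousAt_rpow_const x _ (Or.inl hx.1.ne')).continuousWithinAt)
    · intro t ht
      exact (hw2der t (hsubIoo ht)).differentiableAt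
    · intro t ht
      exact (hW2'der t ht).differentiableAt.congr_of_eventuallyEq (hw2eq t ht).symm
    · -- the second derivative is nonpositive
      intro t ht
      have hvt : 0 < v t := hvpos t ⟨ht.1, ht.2.le⟩
      have htR : t ∈ Ioc (0:ℝ) R₁ := ⟨ht.1, (ht.2.le.trans ht₀R)⟩
      rw [← (hw2eq t ht).deriv_eq, (hW2'der t ht).deriv, hddv t ht]
      have e1 : (2 - αt - q - 1 - 1 : ℝ) = -αt - q := by ring
      have e2 : (2 - αt - 1 - 1 : ℝ) = -αt := by ring
      rw [e1, e2]
      have ec1 : h₀ / (a ^ q * (1 - αt - q) * (2 - αt - q)) * ((2 - αt - q) * ((2 - αt - q - 1) * t ^ (-αt - q)))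
          = h₀ / a ^ q * t ^ (-αt - q) := by
        field_simp
        ring
      have ec2 : C * h₁ / ((1 - αt) * (2 - αt)) * ((2 - αt) * ((2 - αt - 1) * t ^ (-αt)))
          = C * h₁ * t ^ (-αt) := by
        field_simp
        ring
      rw [ec1, ec2]
      -- key lower bound on h t * f (v t)
      have hfeq : f (v t) = v t ^ (-q) + g₁ (v t) := by
        rw [hH2 (v t) hvt.ne', abs_of_pos hvt]
        congr 1
        rw [Real.rpow_neg hvt.le, Real.rpow_add hvt, Real.rpow_one]
        field_simp
      have hvq : (a * t) ^ (-q) ≤ v t ^ (-q) :=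
        Real.rpow_le_rpow_of_nonpos hvt (hvle t ⟨ht.1, ht.2.le⟩) (neg_nonpos.mpr hq0.le)
      have hb1' : h₀ * t ^ (-αt) * ((a * t) ^ (-q)) ≤ h t * v t ^ (-q) :=
        mul_le_mul (hhbd t htR).1 hvq (Real.rpow_nonneg (mul_pos ha ht.1).le _) (hhpos t ht).le
      have key1 : h₀ * t ^ (-αt) * ((a * t) ^ (-q)) = h₀ / a ^ q * t ^ (-αt - q) := by
        rw [Real.mul_rpow ha.le ht.1.le, Real.rpow_neg ha.le,
          show (-αt - q : ℝ) = -αt + -q by ring, Real.rpow_add ht.1]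
        ring
      have hg : -C ≤ g₁ (v t) := by
        apply hg1C
        constructor
        · exact hvt.le
        · calc v t ≤ a * t := hvle t ⟨ht.1, ht.2.le⟩
            _ ≤ a * R₁ := by
              apply mul_le_mul_of_nonneg_left (htR.2) ha.le
      have hb2' : -(C * h₁ * t ^ (-αt)) ≤ h t * g₁ (v t) := by
        have h5 : h t * (-C) ≤ h t * g₁ (v t) := mul_le_mul_of_nonneg_left hg (hhpos t ht).le
        have h6 := (hhbd t htR).2
        nlinarith
      have hsplit : h t * f (v t) = h t * v t ^ (-q) + h t * g₁ (v t) := by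
        rw [hfeq]; ring
      rw [← key1] at *
      linarith [hb1', hb2', hsplit]
    · -- slope limit
      have l1 : Tendsto (fun t : ℝ => t ^ (2 - αt - q - 1)) (nhdsWithin 0 (Ioi 0)) (nhds 0) := by
        have hc := (Real.continuousAt_rpow_const 0 (2 - αt - q - 1) (Or.inr (by linarith))).tendsto
        rw [Real.zero_rpow (ne_of_gt (by linarith))] at hc
        exact hc.mono_left nhdsWithin_le_nhds
      have l2 : Tendsto (fun t : ℝ => t ^ (2 - αt - 1)) (nhdsWithin 0 (Ioi 0)) (nhds 0) := by
        have hc := (Real.continuousAt_rpow_const 0 (2 - αt - 1) (Or.inr (by linarith))).tendsto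
        rw [Real.zero_rpow (ne_of_gt (by linarith))] at hc
        exact hc.mono_left nhdsWithin_le_nhds
      have hT : Tendsto (fun t => v t / t - a
          + h₀ / (a ^ q * (1 - αt - q) * (2 - αt - q)) * t ^ (2 - αt - q - 1)
          - C * h₁ / ((1 - αt) * (2 - αt)) * t ^ (2 - αt - 1)) (nhdsWithin 0 (Ioi 0))
          (nhds (a - a + h₀ / (a ^ q * (1 - αt - q) * (2 - αt - q)) * 0
            - C * h₁ / ((1 - αt) * (2 - αt)) * 0)) :=
        ((hvslope.sub tendsto_const_nhds).add (l1.const_mul _)).sub (l2.const_mul _)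
      have hz : (a - a + h₀ / (a ^ q * (1 - αt - q) * (2 - αt - q)) * 0
            - C * h₁ / ((1 - αt) * (2 - αt)) * 0 : ℝ) = 0 := by ring
      rw [hz] at hT
      apply hT.congr'
      filter_upwards [self_mem_nhdsWithin] with t (ht : 0 < t)
      have e1 : t ^ (2 - αt - q) = t ^ (2 - αt - q - 1) * t := by
        have h9 := (Real.rpow_add ht (2 - αt - q - 1) 1).symm
        rw [Real.rpow_one] at h9
        rw [h9]; congr 1; ring
      have e2 : t ^ (2 - αt) = t ^ (2 - αt - 1) * t := by
        have h9 := (Real.rpow_add ht (2 - αt - 1) 1).symm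
        rw [Real.rpow_one] at h9
        rw [h9]; congr 1; ring
      rw [e1, e2, eq_div_iff ht.ne']
      have hvv : v t / t * t = v t := div_mul_cancel₀ _ ht.ne'
      linear_combination hvv
  -- conclude
  intro t ht
  refine ⟨⟨hvpos t ht, hvle t ht⟩, ?_⟩
  have hm := hmain t ht
  have e1 : h₀ / (a ^ q * (1 - αt - q) * (2 - αt - q)) * t ^ (2 - αt - q)
      = h₀ * t ^ (2 - αt - q) / (a ^ q * (1 - αt - q) * (2 - αt - q)) := by ring
  have e2 : C * h₁ / ((1 - αt) * (2 - αt)) * t ^ (2 - αt)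
      = C * h₁ * t ^ (2 - αt) / ((1 - αt) * (2 - αt)) := by ring
  rw [← e1, ← e2]
  linarith [hm]
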